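/- Let a finitely generated group G act minimally (no proper invariant subtree) on two simplicial trees T and T' that are equivalent, i.e., each dominates the other via G-equivariant maps. If T' is acylindrical, then T is acylindrical. Here a G-tree is (k,C)-acylindrical if the pointwise stabilizer of every arc of length at least k+1 has order at most C, and acylindrical means (k,C)-acylindrical for some k and C. -/

import Mathlib

open SimpleGraph

variable {G : Type*} [Group G]

/-- A `G`-tree is `(k,C)`-acylindrical if the pointwise stabilizer of every arc (path)
of length at least `k+1` has order at most `C`. -/
def IsAcylindrical {V : Type*} [MulAction G V] (T : SimpleGraph V) (k C : ℕ) : Prop :=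
  ∀ (u v : V) (p : T.Walk u v), p.IsPath → k + 1 ≤ p.length →
    {g : G | ∀ x ∈ p.support, g • x = x}.Finite ∧
    {g : G | ∀ x ∈ p.support, g • x = x}.ncard ≤ C

/-- The `G`-action on a tree is minimal: there is no proper nonempty invariant subtree. -/
def IsMinimalTreeAction {V : Type*} [MulAction G V] (T : SimpleGraph V) : Prop :=
  ∀ S : Set V, S.Nonempty → (∀ (g : G), ∀ x ∈ S, g • x ∈ S) →
    (∀ x ∈ S, ∀ y ∈ S, ∃ p : T.Walk x y, ∀ z ∈ p.support, z ∈ S) → S = Set.univ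

section Aux

variable {V : Type*} [MulAction G V]

/-- The action of `g` as a graph homomorphism. -/
def smulHom (T : SimpleGraph V)
    (hadj : ∀ (g : G) (u v : V), T.Adj u v → T.Adj (g • u) (g • v)) (g : G) : T →g T where
  toFun := (g • ·)
  map_rel' := fun h => hadj g _ _ h

@[simp] lemma smulHom_apply (T : SimpleGraph V)
    (hadj : ∀ (g : G) (u v : V), T.Adj u v → T.Adj (g • u) (g • v)) (g : G) (v : V) :
    smulHom T hadj g v = g • v := rfl

lemma dist_smul_smul (T : SimpleGraph V) (hconn : T.Connected)
    (hadj : ∀ (g : G) (u v : V), T.Adj u v → T.Adj (g • u) (g • v))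
    (g : G) (u v : V) : T.dist (g • u) (g • v) = T.dist u v := by
  have key : ∀ (g : G) (u v : V), T.dist (g • u) (g • v) ≤ T.dist u v := by
    intro g u v
    obtain ⟨w, hw⟩ := (hconn u v).exists_walk_length_eq_dist
    calc T.dist (g • u) (g • v) ≤ (w.map (smulHom T hadj g)).length := dist_le _
      _ = T.dist u v := by rw [Walk.length_map, hw]
  refine le_antisymm (key g u v) ?_
  have := key g⁻¹ (g • u) (g • v)
  simpa using this

lemma path_length_eq_dist (T : SimpleGraph V) (hT : T.IsTree) {u v : V}
    (p : T.Walk u v) (hp : p.IsPath) : p.length = T.dist u v := by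
  classical
  obtain ⟨w, hw⟩ := (hT.isConnected u v).exists_walk_length_eq_dist
  have huniq : (⟨p, hp⟩ : T.Path u v) = w.toPath := hT.2.path_unique _ _
  have h1 : p.length ≤ w.length := by
    have : p = (w.toPath : T.Walk u v) := congrArg Subtype.val huniq
    rw [this]
    exact Walk.length_bypass_le _
  have h2 := dist_le p
  omega

lemma list_map_eq_self {α : Type*} {f : α → α} :
    ∀ {l : List α}, l.map f = l → ∀ x ∈ l, f x = x := by
  intro l
  induction l with
  | nil => simp
  | cons a l ih =>
    intro h x hx
    simp only [List.map_cons, List.cons.injEq] at h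
    rcases List.mem_cons.mp hx with hx | hx
    · rw [hx]; exact h.1
    · exact ih h.2 x hx

/-- Existence of an equivariant map given domination. -/
lemma exists_equivariant {V' : Type*} [MulAction G V']
    (hdom : ∀ v : V, ∃ v' : V', ∀ g ∈ MulAction.stabilizer G v, g • v' = v') :
    ∃ f : V → V', ∀ (h : G) (v : V), f (h • v) = h • f v := by
  classical
  letI s := MulAction.orbitRel G V
  let r : V → V := fun v => (Quotient.mk s v).out
  have hrel : ∀ v : V, r v ∈ MulAction.orbit G v := by
    intro v
    have := Quotient.mk_out (s := s) v
    exact (MulAction.orbitRel_apply (G := G)).mp this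
  have hrs : ∀ (h : G) (v : V), r (h • v) = r v := by
    intro h v
    have : (Quotient.mk s (h • v)) = Quotient.mk s v :=
      Quotient.sound ((MulAction.orbitRel_apply (G := G)).mpr (MulAction.mem_orbit v h))
    simp only [r, this]
  choose c hc using fun v => MulAction.mem_orbit_iff.mp (hrel v)
  choose σ hσ using hdom
  refine ⟨fun v => (c v)⁻¹ • σ (r v), ?_⟩
  intro h v
  have hcv : (c v) • v = r v := hc v
  have hchv : (c (h • v)) • (h • v) = r v := by rw [hc (h • v), hrs]
  have h1 : (c v)⁻¹ • r v = v := by rw [← hcv]; simp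
  have hstab : (c (h • v)) * h * (c v)⁻¹ ∈ MulAction.stabilizer G (r v) := by
    rw [MulAction.mem_stabilizer_iff, mul_smul, mul_smul, h1]
    exact hchv
  have := hσ (r v) _ hstab
  show (c (h • v))⁻¹ • σ (r (h • v)) = h • ((c v)⁻¹ • σ (r v))
  rw [hrs]
  calc (c (h • v))⁻¹ • σ (r v) = (c (h • v))⁻¹ • ((c (h • v)) * h * (c v)⁻¹) • σ (r v) := by
        rw [this]
    _ = h • (c v)⁻¹ • σ (r v) := by rw [smul_smul]; group; rw [mul_smul]

/-- A minimal action of a finitely generated group on a tree is cocompact. -/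
lemma cocompact_of_minimal (T : SimpleGraph V) (hT : T.IsTree)
    (hadj : ∀ (g : G) (u v : V), T.Adj u v → T.Adj (g • u) (g • v))
    (hmin : IsMinimalTreeAction (G := G) T) (hFG : Group.FG G) :
    ∃ K : Finset V, (∀ v : V, ∃ g : G, ∃ w ∈ K, g • w = v) ∧
      (∀ u v : V, T.Adj u v → ∃ g : G, ∃ a ∈ K, ∃ b ∈ K, T.Adj a b ∧
        ((g • a = u ∧ g • b = v) ∨ (g • a = v ∧ g • b = u))) := by
  classical
  obtain ⟨S, hS⟩ := hFG
  have hconn := hT.isConnected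
  have hne : Nonempty V := hconn.nonempty
  let x : V := Classical.arbitrary V
  let ws : ∀ s : G, T.Walk x (s • x) := fun s => Classical.choice (hconn.preconnected x (s • x))
  let K : Finset V := insert x (S.biUnion fun s => (ws s).support.toFinset)
  have hxK : x ∈ K := Finset.mem_insert_self _ _
  have hsupK : ∀ s ∈ S, ∀ z ∈ (ws s).support, z ∈ K := fun s hs z hz =>
    Finset.mem_insert_of_mem (Finset.mem_biUnion.mpr ⟨s, hs, List.mem_toFinset.mpr hz⟩)
  set Y : Set V := {v | ∃ g : G, ∃ w ∈ K, g • w = v} with hYdef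
  have hKY : ∀ w ∈ K, (w : V) ∈ Y := fun w hw => ⟨1, w, hw, one_smul _ _⟩
  have hYinv : ∀ (g : G), ∀ v ∈ Y, g • v ∈ Y := by
    rintro g v ⟨g₀, w, hw, rfl⟩
    exact ⟨g * g₀, w, hw, (mul_smul g g₀ w)⟩
  set GE : List (Sym2 V) → Prop :=
    fun l => ∀ e ∈ l, ∃ (g : G) (a b : V), a ∈ K ∧ b ∈ K ∧ e = s(g • a, g • b) with hGEdef
  have htransS : ∀ (g : G) {u v : V} (W : T.Walk u v), (∀ z ∈ W.support, z ∈ Y) →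
      ∀ z ∈ (W.map (smulHom T hadj g)).support, z ∈ Y := by
    intro g u v W hW z hz
    rw [Walk.support_map] at hz
    obtain ⟨z₀, hz₀, rfl⟩ := List.mem_map.mp hz
    exact hYinv g z₀ (hW z₀ hz₀)
  have htransE : ∀ (g : G) {u v : V} (W : T.Walk u v), GE W.edges →
      GE (W.map (smulHom T hadj g)).edges := by
    intro g u v W hW e he
    rw [Walk.edges_map] at he
    obtain ⟨e₀, he₀, rfl⟩ := List.mem_map.mp he
    obtain ⟨g₀, a, b, haK, hbK, rfl⟩ := hW e₀ he₀
    refine ⟨g * g₀, a, b, haK, hbK, ?_⟩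
    rw [Sym2.map_pair_eq]
    simp [mul_smul]
  have claimA : ∀ w ∈ K, ∃ W : T.Walk x w, (∀ z ∈ W.support, z ∈ K) ∧
      (∀ e ∈ W.edges, ∃ a b, a ∈ K ∧ b ∈ K ∧ e = s(a, b)) := by
    intro w hw
    rcases Finset.mem_insert.mp hw with h | h
    · subst h
      exact ⟨Walk.nil, by simpa using hxK, by simp⟩
    · obtain ⟨s, hs, hzs⟩ := Finset.mem_biUnion.mp h
      replace hzs := List.mem_toFinset.mp hzs
      refine ⟨(ws s).takeUntil w hzs, ?_, ?_⟩
      · intro z hz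
        exact hsupK s hs z (Walk.support_takeUntil_subset _ hzs hz)
      · intro e he
        have he' : e ∈ (ws s).edges := Walk.edges_takeUntil_subset _ hzs he
        induction e with
        | _ a b =>
          exact ⟨a, b, hsupK s hs a (Walk.fst_mem_support_of_mem_edges _ he'),
            hsupK s hs b (Walk.snd_mem_support_of_mem_edges _ he'), rfl⟩
  have hKgood : ∀ {u v : V} (W : T.Walk u v), (∀ z ∈ W.support, z ∈ K) →
      (∀ e ∈ W.edges, ∃ a b, a ∈ K ∧ b ∈ K ∧ e = s(a, b)) →
      (∀ z ∈ W.support, z ∈ Y) ∧ GE W.edges := by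
    intro u v W h1 h2
    refine ⟨fun z hz => hKY z (h1 z hz), fun e he => ?_⟩
    obtain ⟨a, b, haK, hbK, rfl⟩ := h2 e he
    exact ⟨1, a, b, haK, hbK, by simp⟩
  have claimB : ∀ g : G, ∃ W : T.Walk x (g • x), (∀ z ∈ W.support, z ∈ Y) ∧ GE W.edges := by
    intro g
    have hg : g ∈ Subgroup.closure (S : Set G) := by rw [hS]; trivial
    refine Subgroup.closure_induction
      (p := fun g _ => ∃ W : T.Walk x (g • x), (∀ z ∈ W.support, z ∈ Y) ∧ GE W.edges)
      ?_ ?_ ?_ ?_ hg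
    · intro s hs
      obtain ⟨h1, h2⟩ := hKgood (ws s) (hsupK s hs) (fun e he => by
        induction e with
        | _ a b =>
          exact ⟨a, b, hsupK s hs a (Walk.fst_mem_support_of_mem_edges _ he),
            hsupK s hs b (Walk.snd_mem_support_of_mem_edges _ he), rfl⟩)
      exact ⟨ws s, h1, h2⟩
    · refine ⟨Walk.nil.copy rfl (one_smul G x).symm, ?_, ?_⟩
      · intro z hz
        rw [Walk.support_copy] at hz
        simp only [Walk.support_nil, List.mem_singleton] at hz
        subst hz
        exact hKY x hxK
      · intro e he
        rw [Walk.edges_copy] at he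
        simp at he
    · rintro g h hgm hhm ⟨W₁, hs₁, he₁⟩ ⟨W₂, hs₂, he₂⟩
      refine ⟨W₁.append ((W₂.map (smulHom T hadj g)).copy (smulHom_apply T hadj g x) ((smulHom_apply T hadj g (h • x)).trans (mul_smul g h x).symm)), ?_, ?_⟩
      · intro z hz
        rw [Walk.mem_support_append_iff] at hz
        rcases hz with hz | hz
        · exact hs₁ z hz
        · rw [Walk.support_copy] at hz
          exact htransS g W₂ hs₂ z hz
      · intro e he
        rw [Walk.edges_append] at he
        rcases List.mem_append.mp he with he | he
        · exact he₁ e he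
        · rw [Walk.edges_copy] at he
          exact htransE g W₂ he₂ e he
    · rintro g hgm ⟨W, hsup, hedg⟩
      refine ⟨((W.map (smulHom T hadj g⁻¹)).reverse).copy ((smulHom_apply T hadj g⁻¹ (g • x)).trans (inv_smul_smul g x)) (smulHom_apply T hadj g⁻¹ x), ?_, ?_⟩
      · intro z hz
        rw [Walk.support_copy, Walk.support_reverse, List.mem_reverse] at hz
        exact htransS g⁻¹ W hsup z hz
      · intro e he
        rw [Walk.edges_copy, Walk.edges_reverse, List.mem_reverse] at he
        exact htransE g⁻¹ W hedg e he
  have claimC : ∀ u ∈ Y, ∀ v ∈ Y, ∃ W : T.Walk u v, (∀ z ∈ W.support, z ∈ Y) ∧ GE W.edges := by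
    rintro u ⟨g, w, hw, rfl⟩ v ⟨h, w', hw', rfl⟩
    obtain ⟨A₁, hA₁s, hA₁e⟩ := claimA w hw
    obtain ⟨A₂, hA₂s, hA₂e⟩ := claimA w' hw'
    obtain ⟨A₁s, A₁e⟩ := hKgood A₁ hA₁s hA₁e
    obtain ⟨A₂s, A₂e⟩ := hKgood A₂ hA₂s hA₂e
    obtain ⟨B, hBs, hBe⟩ := claimB (g⁻¹ * h)
    let W₁ : T.Walk (g • w) (g • x) := A₁.reverse.map (smulHom T hadj g)
    let W₂ : T.Walk (g • x) (h • x) :=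
      (B.map (smulHom T hadj g)).copy (smulHom_apply T hadj g x)
        (by rw [smulHom_apply, smul_smul, mul_inv_cancel_left])
    let W₃ : T.Walk (h • x) (h • w') := A₂.map (smulHom T hadj h)
    refine ⟨W₁.append (W₂.append W₃), ?_, ?_⟩
    · intro z hz
      rw [Walk.mem_support_append_iff] at hz
      rcases hz with hz | hz
      · refine htransS g A₁.reverse ?_ z hz
        intro z' hz'
        rw [Walk.support_reverse, List.mem_reverse] at hz'
        exact A₁s z' hz'
      · rw [Walk.mem_support_append_iff] at hz
        rcases hz with hz | hz
        · rw [Walk.support_copy] at hz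
          exact htransS g B hBs z hz
        · exact htransS h A₂ A₂s z hz
    · intro e he
      rw [Walk.edges_append, List.mem_append] at he
      rcases he with he | he
      · refine htransE g A₁.reverse ?_ e he
        intro e' he'
        rw [Walk.edges_reverse, List.mem_reverse] at he'
        exact A₁e e' he'
      · rw [Walk.edges_append, List.mem_append] at he
        rcases he with he | he
        · rw [Walk.edges_copy] at he
          exact htransE g B hBe e he
        · exact htransE h A₂ A₂e e he
  have hY : Y = Set.univ := by
    refine hmin Y ⟨x, hKY x hxK⟩ hYinv ?_
    intro u hu v hv
    obtain ⟨W, hWs, _⟩ := claimC u hu v hv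
    exact ⟨W, hWs⟩
  have hYall : ∀ v : V, v ∈ Y := fun v => hY ▸ Set.mem_univ v
  refine ⟨K, fun v => hYall v, ?_⟩
  intro u v huv
  obtain ⟨W, _, hWe⟩ := claimC u (hYall u) v (hYall v)
  have hPe : (Walk.cons huv Walk.nil : T.Walk u v).IsPath := by
    simp [Walk.isPath_def, huv.ne]
  have huniq : (⟨Walk.cons huv Walk.nil, hPe⟩ : T.Path u v) = W.toPath :=
    hT.2.path_unique _ _
  have hmem : s(u, v) ∈ (W.toPath : T.Walk u v).edges := by
    rw [← huniq]
    simp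
  obtain ⟨g, a, b, haK, hbK, he⟩ := hWe _ (Walk.edges_toPath_subset W hmem)
  rcases Sym2.eq_iff.mp he with ⟨h1, h2⟩ | ⟨h1, h2⟩
  · have hab : T.Adj a b := by
      have := hadj g⁻¹ _ _ (h1 ▸ h2 ▸ huv)
      simpa using this
    exact ⟨g, a, haK, b, hbK, hab, Or.inl ⟨h1.symm, h2.symm⟩⟩
  · have hab : T.Adj a b := by
      have := hadj g⁻¹ _ _ (h2 ▸ h1 ▸ huv)
      have h3 : T.Adj b a := by simpa using this
      exact h3.symm
    exact ⟨g, a, haK, b, hbK, hab, Or.inr ⟨h2.symm, h1.symm⟩⟩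

end Aux

/-- If a finitely generated group acts minimally on two equivalent simplicial trees
(each dominating the other: every vertex stabilizer of one fixes a vertex of the other),
and one of them is acylindrical, then so is the other. -/
theorem stmt5 {V V' : Type*} [MulAction G V] [MulAction G V']
    (hFG : Group.FG G)
    (T : SimpleGraph V) (T' : SimpleGraph V')
    (hTtree : T.IsTree) (hT'tree : T'.IsTree)
    (hadj : ∀ (g : G) (u v : V), T.Adj u v → T.Adj (g • u) (g • v))
    (hadj' : ∀ (g : G) (u v : V'), T'.Adj u v → T'.Adj (g • u) (g • v))
    (hmin : IsMinimalTreeAction (G := G) T) (hmin' : IsMinimalTreeAction (G := G) T')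
    (hdom : ∀ v : V, ∃ v' : V', ∀ g ∈ MulAction.stabilizer G v, g • v' = v')
    (hdom' : ∀ v' : V', ∃ v : V, ∀ g ∈ MulAction.stabilizer G v', g • v = v)
    (hacyl' : ∃ k C : ℕ, IsAcylindrical (G := G) T' k C) :
    ∃ k C : ℕ, IsAcylindrical (G := G) T k C := by
  classical
  obtain ⟨k', C', hac⟩ := hacyl'
  obtain ⟨f, hf⟩ := exists_equivariant hdom
  obtain ⟨f', hf'⟩ := exists_equivariant hdom'
  obtain ⟨K, hKv, -⟩ := cocompact_of_minimal T hTtree hadj hmin hFG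
  obtain ⟨K', -, hK'e⟩ := cocompact_of_minimal T' hT'tree hadj' hmin' hFG
  set L : ℕ := (K' ×ˢ K').sup (fun ab => T.dist (f' ab.1) (f' ab.2)) + 1 with hLdef
  have hLipAdj : ∀ a b : V', T'.Adj a b → T.dist (f' a) (f' b) ≤ L := by
    intro a b hab
    obtain ⟨g, a₀, ha₀, b₀, hb₀, hadj₀, hcase⟩ := hK'e a b hab
    have hmemP : (a₀, b₀) ∈ K' ×ˢ K' := Finset.mem_product.mpr ⟨ha₀, hb₀⟩
    have hsup : T.dist (f' a₀) (f' b₀) ≤ L :=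
      le_trans (Finset.le_sup (f := fun ab => T.dist (f' ab.1) (f' ab.2)) hmemP)
        (Nat.le_succ _)
    rcases hcase with ⟨h1, h2⟩ | ⟨h1, h2⟩
    · rw [← h1, ← h2, hf', hf', dist_smul_smul T hTtree.isConnected hadj]
      exact hsup
    · rw [← h1, ← h2, hf', hf', dist_smul_smul T hTtree.isConnected hadj,
        SimpleGraph.dist_comm]
      exact hsup
  have hLipWalk : ∀ (a b : V') (W : T'.Walk a b), T.dist (f' a) (f' b) ≤ L * W.length := by
    intro a b W
    induction W with
    | nil => simp
    | @cons a c b h p ih =>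
      calc T.dist (f' a) (f' b) ≤ T.dist (f' a) (f' c) + T.dist (f' c) (f' b) :=
            hTtree.isConnected.dist_triangle
        _ ≤ L + L * p.length := add_le_add (hLipAdj a c h) ih
        _ = L * (Walk.cons h p).length := by rw [Walk.length_cons]; ring
  have hLip : ∀ a b : V', T.dist (f' a) (f' b) ≤ L * T'.dist a b := by
    intro a b
    obtain ⟨W, hW⟩ := (hT'tree.isConnected a b).exists_walk_length_eq_dist
    rw [← hW]
    exact hLipWalk a b W
  set M : ℕ := K.sup (fun w => T.dist w (f' (f w))) with hMdef
  have hM : ∀ v : V, T.dist v (f' (f v)) ≤ M := by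
    intro v
    obtain ⟨g, w, hw, rfl⟩ := hKv v
    rw [hf, hf', dist_smul_smul T hTtree.isConnected hadj]
    exact Finset.le_sup (f := fun w => T.dist w (f' (f w))) hw
  refine ⟨2 * M + L * (k' + 1), C', ?_⟩
  intro u v p hp hlen
  have hdUV : 2 * M + L * (k' + 1) + 1 ≤ T.dist u v := by
    rw [← path_length_eq_dist T hTtree p hp]
    exact hlen
  have hD' : k' + 1 ≤ T'.dist (f u) (f v) := by
    have t1 := hM u
    have t2 := hLip (f u) (f v)
    have t3 : T.dist (f' (f v)) v ≤ M := by
      rw [SimpleGraph.dist_comm]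
      exact hM v
    have htri : T.dist u v ≤ T.dist u (f' (f u)) +
        (T.dist (f' (f u)) (f' (f v)) + T.dist (f' (f v)) v) :=
      le_trans hTtree.isConnected.dist_triangle
        (Nat.add_le_add_left hTtree.isConnected.dist_triangle _)
    by_contra hcon
    push_neg at hcon
    have hle : T'.dist (f u) (f v) + 1 ≤ k' + 1 := hcon
    have h1 : L * T'.dist (f u) (f v) + L ≤ L * (k' + 1) := by
      calc L * T'.dist (f u) (f v) + L = L * (T'.dist (f u) (f v) + 1) := by ring
        _ ≤ L * (k' + 1) := Nat.mul_le_mul_left _ hle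
    have hL1 : 1 ≤ L := Nat.le_add_left 1 _
    omega
  have hfixu : ∀ g : G, (∀ x ∈ p.support, g • x = x) → g • f u = f u ∧ g • f v = f v := by
    intro g hg
    constructor
    · rw [← hf, hg u p.start_mem_support]
    · rw [← hf, hg v p.end_mem_support]
  obtain ⟨W', hW'⟩ := (hT'tree.isConnected (f u) (f v)).exists_walk_length_eq_dist
  set q : T'.Walk (f u) (f v) := (W'.toPath : T'.Walk (f u) (f v)) with hqdef
  have hqpath : q.IsPath := W'.toPath.2
  have hqlen : k' + 1 ≤ q.length := by
    rw [path_length_eq_dist T' hT'tree q hqpath]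
    exact hD'
  obtain ⟨hfin, hcard⟩ := hac (f u) (f v) q hqpath hqlen
  have hsub : {g : G | ∀ x ∈ p.support, g • x = x} ⊆ {g : G | ∀ x ∈ q.support, g • x = x} := by
    intro g hg
    obtain ⟨h1, h2⟩ := hfixu g hg
    have hinj : Function.Injective ((g • ·) : V' → V') := MulAction.injective g
    have hqg : ((q.map (smulHom T' hadj' g)).copy ((smulHom_apply T' hadj' g (f u)).trans h1) ((smulHom_apply T' hadj' g (f v)).trans h2)).IsPath := by
      rw [Walk.isPath_copy]
      exact Walk.map_isPath_of_injective hinj hqpath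
    have huniq : (⟨(q.map (smulHom T' hadj' g)).copy ((smulHom_apply T' hadj' g (f u)).trans h1) ((smulHom_apply T' hadj' g (f v)).trans h2), hqg⟩ : T'.Path (f u) (f v)) =
        ⟨q, hqpath⟩ := hT'tree.2.path_unique _ _
    have hsupp : q.support.map (g • ·) = q.support := by
      have h3 : ((q.map (smulHom T' hadj' g)).copy ((smulHom_apply T' hadj' g (f u)).trans h1) ((smulHom_apply T' hadj' g (f v)).trans h2)).support = q.support :=
        congrArg Walk.support (congrArg Subtype.val huniq)
      rw [Walk.support_copy, Walk.support_map] at h3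
      exact h3
    intro x hx
    exact list_map_eq_self hsupp x hx
  exact ⟨hfin.subset hsub, le_trans (Set.ncard_le_ncard hsub hfin) hcard⟩
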